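/- arXiv:2308.07793 — 4 statements merged into one kernel-verified Lean document; each statement's English description precedes it below -/
import Mathlib

section
/- Let L', M, K be positive integers, and let Q = ∑_{i=0}^{2K} C(L', i) be the size of a Hamming ball of radius 2K in {0,1}^{L'}. If 2^{L'} ≥ M·Q, then the number of sets {a₁,…,a_M} ⊆ {0,1}^{L'} of cardinality M containing the all-ones string, with pairwise Hamming distance at least 2K+1, is at least (2^{L'} − M·Q)^{M−1} / (M−1)!. -/
open Finset

/-- Hamming ball of radius `r` has at most `∑_{i≤r} C(L',i)` points. -/
lemma ball_card_le (L' : ℕ) (a : Fin L' → Bool) (r : ℕ) :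
    (Finset.univ.filter fun x : Fin L' → Bool => hammingDist a x ≤ r).card
      ≤ ∑ i ∈ Finset.range (r + 1), Nat.choose L' i := by
  classical
  have key : (Finset.univ.filter fun x : Fin L' → Bool => hammingDist a x ≤ r).card
      ≤ ((Finset.range (r + 1)).biUnion fun i =>
          Finset.powersetCard i (Finset.univ : Finset (Fin L'))).card := by
    apply Finset.card_le_card_of_injOn
      (fun x : Fin L' → Bool => Finset.univ.filter fun j => a j ≠ x j)
    · intro x hx
      simp only [Finset.mem_coe, mem_filter, mem_univ, true_and] at hx
      refine Finset.mem_biUnion.2 ⟨hammingDist a x, Finset.mem_range.2 (Nat.lt_succ_of_le hx), ?_⟩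
      rw [Finset.mem_powersetCard_univ]
      rfl
    · intro x _ y _ hxy
      funext j
      have hj : (a j ≠ x j) ↔ (a j ≠ y j) := by
        have := Finset.ext_iff.1 hxy j
        simpa using this
      revert hj
      have : ∀ b c d : Bool, ((d ≠ b) ↔ (d ≠ c)) → b = c := by decide
      exact this (x j) (y j) (a j)
  refine key.trans (le_of_eq ?_)
  rw [Finset.card_biUnion]
  · refine Finset.sum_congr rfl fun i _ => ?_
    rw [Finset.card_powersetCard, Finset.card_univ, Fintype.card_fin]
  · intro i hi j hj hij
    refine Finset.disjoint_left.2 fun s hs hs' => ?_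
    rw [Finset.mem_powersetCard_univ] at hs hs'
    exact hij (hs ▸ hs')

/-- the number of `M`-element subsets of `{0,1}^{L'}` containing the all-ones
string with pairwise Hamming distance at least `2K+1` is at least
`(2^{L'} − M·Q)^{M−1} / (M−1)!` where `Q = ∑_{i=0}^{2K} C(L',i)`. -/
theorem stmt1 (L' M K : ℕ) (hL' : 0 < L') (hM : 0 < M) (hK : 0 < K)
    (hQ : M * (∑ i ∈ Finset.range (2 * K + 1), Nat.choose L' i) ≤ 2 ^ L') :
    ((2 : ℝ) ^ L' - M * (∑ i ∈ Finset.range (2 * K + 1), Nat.choose L' i)) ^ (M - 1)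
        / (Nat.factorial (M - 1)) ≤
      (Set.ncard {A : Finset (Fin L' → Bool) |
        (fun _ => true) ∈ A ∧ A.card = M ∧
        ∀ a ∈ A, ∀ b ∈ A, a ≠ b → 2 * K + 1 ≤ hammingDist a b} : ℝ) := by
  classical
  set Q : ℕ := ∑ i ∈ Finset.range (2 * K + 1), Nat.choose L' i with hQdef
  set o : Fin L' → Bool := fun _ => true with ho
  set D : ℕ := 2 ^ L' - M * Q with hD
  -- the tuple sets
  set T : ∀ n : ℕ, Finset (Fin n → (Fin L' → Bool)) := fun n =>
    Finset.univ.filter fun f =>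
      (∀ i, 2 * K + 1 ≤ hammingDist o (f i)) ∧
      (∀ i j, i ≠ j → 2 * K + 1 ≤ hammingDist (f i) (f j)) with hT
  have hQeq : 2 * K + 1 = 2 * K + 1 := rfl
  -- count of tuples
  have hcount : ∀ n, n ≤ M - 1 → D ^ n ≤ (T n).card := by
    intro n
    induction n with
    | zero =>
      intro _
      simp only [pow_zero]
      rw [Nat.one_le_iff_ne_zero, ← Nat.pos_iff_ne_zero, Finset.card_pos]
      refine ⟨fun i => i.elim0, ?_⟩
      simp only [hT, Finset.mem_filter, Finset.mem_univ, true_and]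
      exact ⟨fun i => i.elim0, fun i => i.elim0⟩
    | succ n ih =>
      intro hn
      have hn' : n ≤ M - 1 := Nat.le_of_succ_le hn
      -- for each f in T n, the good extensions
      set Good : (Fin n → (Fin L' → Bool)) → Finset (Fin L' → Bool) := fun f =>
        Finset.univ.filter fun x =>
          2 * K + 1 ≤ hammingDist o x ∧ ∀ i, 2 * K + 1 ≤ hammingDist (f i) x with hGood
      have hGoodCard : ∀ f, D ≤ (Good f).card := by
        intro f
        set Bad : Finset (Fin L' → Bool) :=
          (Finset.univ.filter fun x => hammingDist o x ≤ 2 * K) ∪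
          (Finset.univ : Finset (Fin n)).biUnion
            (fun i => Finset.univ.filter fun x => hammingDist (f i) x ≤ 2 * K) with hBad
        have hBadCard : Bad.card ≤ M * Q := by
          have h1 : Bad.card ≤ Q + n * Q := by
            refine (Finset.card_union_le _ _).trans ?_
            gcongr
            · exact ball_card_le L' o (2 * K)
            · refine (Finset.card_biUnion_le).trans ?_
              calc ∑ i : Fin n, (Finset.univ.filter
                    fun x => hammingDist (f i) x ≤ 2 * K).card
                  ≤ ∑ _i : Fin n, Q := by
                    exact Finset.sum_le_sum fun i _ => ball_card_le L' (f i) (2 * K)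
                _ = n * Q := by simp [mul_comm]
            -- done
          refine h1.trans ?_
          have : Q + n * Q = (n + 1) * Q := by ring
          rw [this]
          have : n + 1 ≤ M := by omega
          exact Nat.mul_le_mul_right _ this
        have hGoodEq : Good f = Finset.univ \ Bad := by
          ext x
          constructor
          · intro hx
            simp only [hGood, Finset.mem_filter, Finset.mem_univ, true_and] at hx
            rw [Finset.mem_sdiff]
            refine ⟨Finset.mem_univ x, fun hxB => ?_⟩
            rcases Finset.mem_union.1 hxB with h | h
            · simp only [Finset.mem_filter, Finset.mem_univ, true_and] at h
              have := hx.1; omega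
            · obtain ⟨i, _, hi⟩ := Finset.mem_biUnion.1 h
              simp only [Finset.mem_filter, Finset.mem_univ, true_and] at hi
              have := hx.2 i; omega
          · intro hx
            rw [Finset.mem_sdiff] at hx
            have hxB := hx.2
            simp only [hGood, Finset.mem_filter, Finset.mem_univ, true_and]
            constructor
            · by_contra h
              exact hxB (Finset.mem_union_left _
                (Finset.mem_filter.2 ⟨Finset.mem_univ x, by omega⟩))
            · intro i
              by_contra h
              exact hxB (Finset.mem_union_right _ (Finset.mem_biUnion.2
                ⟨i, Finset.mem_univ i, Finset.mem_filter.2 ⟨Finset.mem_univ x, by omega⟩⟩))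
        rw [hGoodEq, Finset.card_sdiff_of_subset (Finset.subset_univ Bad)]
        have hcardU : (Finset.univ : Finset (Fin L' → Bool)).card = 2 ^ L' := by
          simp [Finset.card_univ]
        omega
      -- injection from sigma into T (n+1)
      have hinj : ((T n).sigma fun f => Good f).card ≤ (T (n + 1)).card := by
        apply Finset.card_le_card_of_injOn (fun p => Fin.snoc p.1 p.2)
        · rintro ⟨f, x⟩ hp
          simp only [Finset.mem_coe, Finset.mem_sigma] at hp
          obtain ⟨hf, hx⟩ := hp
          simp only [Finset.mem_coe, hT, Finset.mem_filter, Finset.mem_univ, true_and] at hf ⊢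
          simp only [hGood, Finset.mem_filter, Finset.mem_univ, true_and] at hx
          constructor
          · intro i
            rcases Fin.eq_castSucc_or_eq_last i with ⟨j, rfl⟩ | rfl
            · simpa using hf.1 j
            · simpa using hx.1
          · intro i j hij
            rcases Fin.eq_castSucc_or_eq_last i with ⟨i', rfl⟩ | rfl <;>
              rcases Fin.eq_castSucc_or_eq_last j with ⟨j', rfl⟩ | rfl
            · have : i' ≠ j' := fun h => hij (by rw [h])
              simpa using hf.2 i' j' this
            · simpa using hx.2 i'
            · simp only [Fin.snoc_castSucc, Fin.snoc_last]
              rw [hammingDist_comm]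
              exact hx.2 j'
            · exact absurd rfl hij
        · rintro ⟨f, x⟩ _ ⟨g, y⟩ _ h
          simp only at h
          have hfg : f = g := by
            funext i
            have := congrFun h (Fin.castSucc i)
            simpa using this
          have hxy : x = y := by
            have := congrFun h (Fin.last n)
            simpa using this
          simp [hfg, hxy]
      calc D ^ (n + 1) = D ^ n * D := by ring
        _ ≤ (T n).card * D := by exact Nat.mul_le_mul_right D (ih hn')
        _ ≤ ∑ f ∈ T n, (Good f).card := by
            calc (T n).card * D = ∑ _f ∈ T n, D := by simp [mul_comm]
              _ ≤ ∑ f ∈ T n, (Good f).card := Finset.sum_le_sum fun f _ => hGoodCard f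
        _ = ((T n).sigma fun f => Good f).card := (Finset.card_sigma _ _).symm
        _ ≤ (T (n + 1)).card := hinj
  -- the target set as a Finset
  set S : Finset (Finset (Fin L' → Bool)) :=
    Finset.univ.filter fun A =>
      o ∈ A ∧ A.card = M ∧ ∀ a ∈ A, ∀ b ∈ A, a ≠ b → 2 * K + 1 ≤ hammingDist a b with hS
  -- map from tuples to sets
  have hfiber : (T (M - 1)).card ≤ Nat.factorial (M - 1) * S.card := by
    set Ψ : (Fin (M - 1) → (Fin L' → Bool)) → Finset (Fin L' → Bool) :=
      fun f => insert o (Finset.image f Finset.univ) with hΨ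
    have hmaps : ∀ f ∈ T (M - 1), Ψ f ∈ S := by
      intro f hf
      simp only [hT, Finset.mem_filter, Finset.mem_univ, true_and] at hf
      obtain ⟨h1, h2⟩ := hf
      have hfo : ∀ i, f i ≠ o := by
        intro i h
        have := h1 i
        rw [h, hammingDist_self] at this
        omega
      have hfinj : Function.Injective f := by
        intro i j hij
        by_contra hne
        have := h2 i j hne
        rw [hij, hammingDist_self] at this
        omega
      simp only [hS, Finset.mem_filter, Finset.mem_univ, true_and, hΨ]
      refine ⟨Finset.mem_insert_self _ _, ?_, ?_⟩
      · rw [Finset.card_insert_of_notMem, Finset.card_image_of_injective _ hfinj,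
          Finset.card_univ, Fintype.card_fin]
        · omega
        · simp only [Finset.mem_image, Finset.mem_univ, true_and, not_exists]
          exact fun i h => hfo i h
      · intro a ha b hb hab
        simp only [Finset.mem_insert, Finset.mem_image, Finset.mem_univ, true_and] at ha hb
        rcases ha with rfl | ⟨i, rfl⟩ <;> rcases hb with rfl | ⟨j, rfl⟩
        · exact absurd rfl hab
        · exact h1 j
        · rw [hammingDist_comm]; exact h1 i
        · exact h2 i j (fun h => hab (by rw [h]))
    have hcardsum : (T (M - 1)).card = ∑ A ∈ S, ((T (M - 1)).filter fun f => Ψ f = A).card :=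
      Finset.card_eq_sum_card_fiberwise hmaps
    rw [hcardsum]
    have hfib : ∀ A ∈ S, ((T (M - 1)).filter fun f => Ψ f = A).card ≤ Nat.factorial (M - 1) := by
      intro A hA
      simp only [hS, Finset.mem_filter, Finset.mem_univ, true_and] at hA
      obtain ⟨hoA, hcardA, _⟩ := hA
      have hAerase : (A.erase o).card = M - 1 := by
        rw [Finset.card_erase_of_mem hoA, hcardA]
      -- inject fibers into embeddings
      have : ((T (M - 1)).filter fun f => Ψ f = A) ⊆
          (Finset.univ : Finset (Fin (M - 1) ↪ (A.erase o : Finset (Fin L' → Bool)))).image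
            (fun e => fun i => (e i : Fin L' → Bool)) := by
        intro f hf
        simp only [Finset.mem_filter] at hf
        obtain ⟨hfT, hfA⟩ := hf
        simp only [hT, Finset.mem_filter, Finset.mem_univ, true_and] at hfT
        obtain ⟨h1, h2⟩ := hfT
        have hfo : ∀ i, f i ≠ o := by
          intro i h
          have := h1 i
          rw [h, hammingDist_self] at this
          omega
        have hfinj : Function.Injective f := by
          intro i j hij
          by_contra hne
          have := h2 i j hne
          rw [hij, hammingDist_self] at this
          omega
        have hmem : ∀ i, f i ∈ A.erase o := by
          intro i
          rw [Finset.mem_erase]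
          refine ⟨hfo i, ?_⟩
          rw [← hfA, hΨ]
          exact Finset.mem_insert_of_mem (Finset.mem_image.2 ⟨i, Finset.mem_univ i, rfl⟩)
        refine Finset.mem_image.2 ⟨⟨fun i => ⟨f i, hmem i⟩, fun i j h => hfinj (congrArg Subtype.val h)⟩,
          Finset.mem_univ _, rfl⟩
      refine (Finset.card_le_card this).trans ?_
      refine (Finset.card_image_le).trans ?_
      rw [Finset.card_univ, Fintype.card_embedding_eq]
      rw [Fintype.card_coe, hAerase, Fintype.card_fin, Nat.descFactorial_self]
    calc ∑ A ∈ S, ((T (M - 1)).filter fun f => Ψ f = A).card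
        ≤ ∑ _A ∈ S, Nat.factorial (M - 1) := Finset.sum_le_sum hfib
      _ = S.card * Nat.factorial (M - 1) := by simp [mul_comm]
      _ = Nat.factorial (M - 1) * S.card := by ring
  -- wrap up
  have hncard : ({A : Finset (Fin L' → Bool) |
      (fun _ => true) ∈ A ∧ A.card = M ∧
      ∀ a ∈ A, ∀ b ∈ A, a ≠ b → 2 * K + 1 ≤ hammingDist a b} : Set _).ncard = S.card := by
    have hset : ({A : Finset (Fin L' → Bool) |
        (fun _ => true) ∈ A ∧ A.card = M ∧
        ∀ a ∈ A, ∀ b ∈ A, a ≠ b → 2 * K + 1 ≤ hammingDist a b} : Set _) = ↑S := by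
      ext A
      simp [hS, ho]
    rw [hset, Set.ncard_coe_finset]
  rw [hncard]
  have hmain : D ^ (M - 1) ≤ Nat.factorial (M - 1) * S.card :=
    (hcount (M - 1) le_rfl).trans hfiber
  have hDcast : ((2 : ℝ) ^ L' - M * Q) = (D : ℝ) := by
    rw [hD]
    push_cast [Nat.cast_sub hQ]
    ring
  rw [hDcast]
  rw [div_le_iff₀ (by positivity)]
  calc ((D : ℝ)) ^ (M - 1) = ((D ^ (M - 1) : ℕ) : ℝ) := by push_cast; ring
    _ ≤ ((Nat.factorial (M - 1) * S.card : ℕ) : ℝ) := by exact_mod_cast hmain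
    _ = (S.card : ℝ) * Nat.factorial (M - 1) := by push_cast; ring
end

section
/- For every empty prefix and every string c ∈ {0,1}^{L'}, the deletion-matching count satisfies N_D(∅, {c}) = ∑_{r=0}^{K} C(L', r)² · 2^r. In particular this quantity P is independent of c. -/
def del {n : ℕ} (c : Fin n → Bool) (Δ : Finset (Fin n)) : List Bool :=
  ((List.finRange n).filter (fun i => decide (i ∉ Δ))).map c

def Ncnt {ℓ₁ ℓ₂ : ℕ} (c₁ : Fin ℓ₁ → Bool) (c₂ : Fin ℓ₂ → Bool) (r₁ r₂ : ℕ) : ℕ :=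
  (Finset.univ.filter (fun p : Finset (Fin ℓ₁) × Finset (Fin ℓ₂) =>
    p.1.card ≤ r₁ ∧ p.2.card ≤ r₂ ∧ del c₁ p.1 = del c₂ p.2)).card

def ND (L' K ℓ : ℕ) (h : ℓ ≤ L') (a : Fin ℓ → Bool) (A : Finset (Fin L' → Bool)) : ℕ :=
  ∑ c ∈ A, ∑ c' ∈ Finset.univ.filter (fun c' : Fin L' → Bool =>
    ∀ i : Fin ℓ, c' (Fin.castLE h i) = a i), Ncnt c' c K K

lemma length_filter_mem {n : ℕ} (Δ : Finset (Fin n)) :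
    ((List.finRange n).filter (fun i => decide (i ∈ Δ))).length = Δ.card := by
  have hnd : ((List.finRange n).filter (fun i => decide (i ∈ Δ))).Nodup :=
    (List.nodup_finRange n).filter _
  rw [← List.toFinset_card_of_nodup hnd]
  congr 1
  ext i
  simp

lemma length_del {n : ℕ} (c : Fin n → Bool) (Δ : Finset (Fin n)) :
    (del c Δ).length = n - Δ.card := by
  simp only [del, List.length_map]
  have h := List.length_eq_length_filter_add (l := List.finRange n)
    (fun i => decide (i ∈ Δ))
  rw [List.length_finRange] at h
  have h2 : (List.finRange n).filter (fun i => !decide (i ∈ Δ)) =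
      (List.finRange n).filter (fun i => decide (i ∉ Δ)) := by
    apply List.filter_congr; intro x _; simp
  rw [h2, length_filter_mem] at h
  omega

lemma count_eq {n : ℕ} (Δ : Finset (Fin n)) (l : List Bool) (hl : l.length = n - Δ.card) :
    (Finset.univ.filter (fun c' : Fin n → Bool => del c' Δ = l)).card = 2 ^ Δ.card := by
  classical
  set s : List (Fin n) := (List.finRange n).filter (fun i => decide (i ∉ Δ)) with hs_def
  have hsnd : s.Nodup := (List.nodup_finRange n).filter _
  have hslen : s.length = n - Δ.card := by
    have := length_del (fun _ => false) Δ
    simpa [del, hs_def] using this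
  have hmem_s : ∀ x : Fin n, x ∈ s ↔ x ∉ Δ := by
    intro x; simp [hs_def]
  have key : (Finset.univ.filter (fun c' : Fin n → Bool => del c' Δ = l)).card
      = (Finset.univ : Finset (↥Δ → Bool)).card := by
    apply Finset.card_bij' (fun c' _ => fun j : ↥Δ => c' j)
      (fun f _ => fun i : Fin n =>
        if h : i ∈ Δ then f ⟨i, h⟩ else l.getD (s.idxOf i) false)
    · intro c' hc'; exact Finset.mem_univ _
    · intro f _
      rw [Finset.mem_filter]
      refine ⟨Finset.mem_univ _, ?_⟩
      show s.map _ = l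
      apply List.ext_getElem
      · rw [List.length_map, hslen, hl]
      · intro k hk hk'
        rw [List.length_map] at hk
        have hmem : s[k] ∈ s := List.getElem_mem hk
        have hnotin : s[k] ∉ Δ := (hmem_s _).1 hmem
        rw [List.getElem_map]
        rw [dif_neg hnotin]
        rw [List.Nodup.idxOf_getElem hsnd k hk]
        exact List.getD_eq_getElem l false hk'
    · intro c' hc'
      rw [Finset.mem_filter] at hc'
      have hdel : s.map c' = l := hc'.2
      funext x
      by_cases hx : x ∈ Δ
      · simp [hx]
      · rw [dif_neg hx]
        have hxs : x ∈ s := (hmem_s x).2 hx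
        have hidx : s.idxOf x < s.length := List.idxOf_lt_length_iff.2 hxs
        rw [← hdel]
        rw [List.getD_eq_getElem _ false (by simpa using hidx)]
        rw [List.getElem_map, List.getElem_idxOf hidx]
    · intro f _
      funext j
      simp [j.2]
  rw [key]
  simp [Fintype.card_fun]

lemma card_card_eq (n r : ℕ) :
    ((Finset.univ : Finset (Finset (Fin n))).filter (fun Δ => Δ.card = r)).card
      = n.choose r := by
  rw [← Finset.powerset_univ, ← Finset.powersetCard_eq_filter,
    Finset.card_powersetCard, Finset.card_fin]

/-- for the empty prefix and any `c ∈ {0,1}^{L'}`,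
`N_D(∅, {c}) = ∑_{r=0}^{K} C(L', r)² · 2^r`; in particular it is independent of `c`. -/
theorem stmt6 (L' K : ℕ) (c : Fin L' → Bool) :
    ND L' K 0 (Nat.zero_le L') (fun i => i.elim0) {c} =
      ∑ r ∈ Finset.range (K + 1), (Nat.choose L' r) ^ 2 * 2 ^ r := by
  classical
  unfold ND
  rw [Finset.sum_singleton]
  rw [Finset.filter_true_of_mem (fun x _ => fun i => i.elim0)]
  have hb : ∀ Δ : Finset (Fin L'), Δ.card ≤ L' := fun Δ => by
    simpa using Finset.card_le_univ Δ
  have step1 : ∀ c' : Fin L' → Bool, Ncnt c' c K K =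
      ∑ p : Finset (Fin L') × Finset (Fin L'),
        if p.1.card ≤ K ∧ p.2.card ≤ K ∧ del c' p.1 = del c p.2 then 1 else 0 := by
    intro c'; rw [Ncnt, Finset.card_filter]
  simp_rw [step1]
  rw [Finset.sum_comm]
  have inner : ∀ p : Finset (Fin L') × Finset (Fin L'),
      (∑ c' : Fin L' → Bool,
        if p.1.card ≤ K ∧ p.2.card ≤ K ∧ del c' p.1 = del c p.2 then 1 else 0)
      = if p.1.card ≤ K ∧ p.2.card ≤ K ∧ p.1.card = p.2.card
          then 2 ^ p.1.card else 0 := by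
    intro p
    by_cases hA : p.1.card ≤ K ∧ p.2.card ≤ K
    · by_cases hcard : p.1.card = p.2.card
      · rw [if_pos ⟨hA.1, hA.2, hcard⟩]
        have h1 : (∑ c' : Fin L' → Bool,
            if p.1.card ≤ K ∧ p.2.card ≤ K ∧ del c' p.1 = del c p.2 then 1 else 0)
            = (Finset.univ.filter
                (fun c' : Fin L' → Bool => del c' p.1 = del c p.2)).card := by
          rw [Finset.card_filter]
          apply Finset.sum_congr rfl
          intro c' _
          simp [hA.1, hA.2]
        rw [h1, count_eq]
        rw [length_del, hcard]
      · rw [if_neg (by tauto)]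
        apply Finset.sum_eq_zero; intro c' _
        rw [if_neg]
        rintro ⟨-, -, hdel⟩
        apply hcard
        have h1 := length_del c' p.1
        have h2 := length_del c p.2
        rw [hdel, h2] at h1
        have := hb p.1; have := hb p.2
        omega
    · rw [if_neg (by tauto)]
      apply Finset.sum_eq_zero; intro c' _
      rw [if_neg (by tauto)]
  simp_rw [inner]
  rw [Fintype.sum_prod_type]
  have inner2 : ∀ Δ₁ : Finset (Fin L'),
      (∑ Δ₂ : Finset (Fin L'),
        if Δ₁.card ≤ K ∧ Δ₂.card ≤ K ∧ Δ₁.card = Δ₂.card then 2 ^ Δ₁.card else 0)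
      = if Δ₁.card ≤ K then L'.choose Δ₁.card * 2 ^ Δ₁.card else 0 := by
    intro Δ₁
    by_cases h : Δ₁.card ≤ K
    · rw [if_pos h]
      have hcongr : ∀ Δ₂ : Finset (Fin L'),
          (if Δ₁.card ≤ K ∧ Δ₂.card ≤ K ∧ Δ₁.card = Δ₂.card then 2 ^ Δ₁.card else 0)
          = if Δ₂.card = Δ₁.card then 2 ^ Δ₁.card else 0 := by
        intro Δ₂
        by_cases hc : Δ₂.card = Δ₁.card
        · rw [if_pos hc, if_pos ⟨h, by omega, hc.symm⟩]
        · rw [if_neg hc, if_neg (by tauto)]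
      simp_rw [hcongr]
      rw [← Finset.sum_filter, Finset.sum_const, card_card_eq, smul_eq_mul]
    · rw [if_neg h]
      apply Finset.sum_eq_zero; intro Δ₂ _
      rw [if_neg (by tauto)]
  simp_rw [inner2]
  -- group by cardinality
  have outer : (∑ Δ₁ : Finset (Fin L'),
      if Δ₁.card ≤ K then L'.choose Δ₁.card * 2 ^ Δ₁.card else 0)
      = ∑ j ∈ Finset.range (L' + 1),
          L'.choose j * (if j ≤ K then L'.choose j * 2 ^ j else 0) := by
    rw [← (Finset.powerset_univ (α := Fin L')), Finset.sum_powerset]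
    rw [Finset.card_univ, Fintype.card_fin]
    apply Finset.sum_congr rfl
    intro j _
    have : ∀ t ∈ Finset.powersetCard j (Finset.univ : Finset (Fin L')),
        (if t.card ≤ K then L'.choose t.card * 2 ^ t.card else 0)
        = (if j ≤ K then L'.choose j * 2 ^ j else 0) := by
      intro t ht
      rw [(Finset.mem_powersetCard.1 ht).2]
    rw [Finset.sum_congr rfl this, Finset.sum_const, Finset.card_powersetCard,
      Finset.card_fin, smul_eq_mul]
  rw [outer]
  have hterm : ∀ j : ℕ, L'.choose j * (if j ≤ K then L'.choose j * 2 ^ j else 0)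
      = if j ≤ K then (L'.choose j) ^ 2 * 2 ^ j else 0 := by
    intro j
    by_cases h : j ≤ K
    · rw [if_pos h, if_pos h]; ring
    · rw [if_neg h, if_neg h, Nat.mul_zero]
  simp_rw [hterm]
  rw [← Finset.sum_filter]
  apply Finset.sum_subset
  · intro x hx
    rw [Finset.mem_filter, Finset.mem_range] at hx
    rw [Finset.mem_range]; omega
  · intro x hx hnx
    rw [Finset.mem_range] at hx
    rw [Finset.mem_filter, Finset.mem_range] at hnx
    have : L' < x := by omega
    rw [Nat.choose_eq_zero_of_lt this]
    ring
end

section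
/- Suppose Algorithm A builds a string a_i ∈ {0,1}^{L'} bit by bit: starting from q = q_i, at step ℓ set a_{i,ℓ} = 0 if 2^{L'−ℓ} − N_H((a_{i,1},…,a_{i,ℓ−1},0), A) ≥ q, and otherwise set a_{i,ℓ} = 1 and replace q by q − (2^{L'−ℓ} − N_H((a_{i,1},…,a_{i,ℓ−1},0), A)), where A = {a₁,…,a_{i−1}}. If initially 0 < q_i ≤ 2^{L'} − N_H(∅, A), then after each step ℓ the invariant 0 < q ≤ 2^{L'−ℓ} − N_H((a_{i,1},…,a_{i,ℓ}), A) holds, and at the end q = 1 and N_H(a_i, A) = 0. -/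
/-- Hamming distance between two lists (compared entrywise on the zipped part). -/
def hammingDistL (x y : List Bool) : ℕ :=
  (List.zip x y).countP (fun p => decide (p.1 ≠ p.2))

/-- `N_H(a, A)`: number (with multiplicity over `c ∈ A`) of strings `c' ∈ {0,1}^{L'}`
having prefix `a` and `d_H(c', c) ≤ 2K`. -/
def NHl (L' K : ℕ) (a : List Bool) (A : Finset (List Bool)) : ℕ :=
  ∑ c ∈ A, (Finset.univ.filter (fun c' : Fin L' → Bool =>
    a <+: List.ofFn c' ∧ hammingDistL (List.ofFn c') c ≤ 2 * K)).card

/-- One step of the greedy bit-by-bit encoding algorithm: with current prefix `a` (of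
length `ℓ−1`) and counter `q`, append `0` if `2^{L'−ℓ} − N_H((a,0),A) ≥ q`, otherwise
append `1` and decrement `q` by `2^{L'−ℓ} − N_H((a,0),A)`. -/
def greedyStep (L' K : ℕ) (A : Finset (List Bool)) (s : List Bool × ℤ) : List Bool × ℤ :=
  if s.2 ≤ (2 : ℤ) ^ (L' - (s.1.length + 1)) - NHl L' K (s.1 ++ [false]) A then
    (s.1 ++ [false], s.2)
  else
    (s.1 ++ [true], s.2 - ((2 : ℤ) ^ (L' - (s.1.length + 1)) - NHl L' K (s.1 ++ [false]) A))

/-- State of the greedy algorithm after `n` steps, starting from the empty prefix and `q`. -/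
def greedy (L' K : ℕ) (A : Finset (List Bool)) (q : ℤ) (n : ℕ) : List Bool × ℤ :=
  (greedyStep L' K A)^[n] ([], q)

lemma prefix_split {a l : List Bool} (h : a.length < l.length) :
    a <+: l ↔ (a ++ [false] <+: l ∨ a ++ [true] <+: l) := by
  constructor
  · rintro ⟨t, rfl⟩
    match t with
    | [] => simp at h
    | b :: t' =>
      cases b
      · left; exact ⟨t', by simp⟩
      · right; exact ⟨t', by simp⟩
  · rintro (⟨t, rfl⟩ | ⟨t, rfl⟩)
    · exact ⟨false :: t, by simp⟩
    · exact ⟨true :: t, by simp⟩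

lemma prefix_not_both {a l : List Bool} :
    ¬ (a ++ [false] <+: l ∧ a ++ [true] <+: l) := by
  rintro ⟨⟨t1, h1⟩, ⟨t2, h2⟩⟩
  rw [← h2] at h1
  simp [List.append_assoc] at h1

lemma NHl_split (L' K : ℕ) (A : Finset (List Bool)) (a : List Bool) (h : a.length < L') :
    NHl L' K a A = NHl L' K (a ++ [false]) A + NHl L' K (a ++ [true]) A := by
  unfold NHl
  rw [← Finset.sum_add_distrib]
  refine Finset.sum_congr rfl fun c _ => ?_
  rw [← Finset.card_union_of_disjoint]
  · congr 1
    ext c'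
    simp only [Finset.mem_union, Finset.mem_filter, Finset.mem_univ, true_and]
    have hl : a.length < (List.ofFn c').length := by simpa using h
    rw [prefix_split hl]; tauto
  · rw [Finset.disjoint_left]
    rintro c' hc' hc''
    simp only [Finset.mem_filter] at hc' hc''
    exact prefix_not_both ⟨hc'.2.1, hc''.2.1⟩

lemma greedy_succ (L' K : ℕ) (A : Finset (List Bool)) (q : ℤ) (n : ℕ) :
    greedy L' K A q (n + 1) = greedyStep L' K A (greedy L' K A q n) :=
  Function.iterate_succ_apply' _ _ _

lemma greedy_len (L' K : ℕ) (A : Finset (List Bool)) (q : ℤ) (n : ℕ) :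
    (greedy L' K A q n).1.length = n := by
  induction n with
  | zero => rfl
  | succ n ih =>
    rw [greedy_succ]
    unfold greedyStep
    split <;> simp [ih]

/-- if initially `0 < q ≤ 2^{L'} − N_H(∅, A)`, the invariant
`0 < q ≤ 2^{L'−ℓ} − N_H((a₁,…,a_ℓ), A)` holds after each step `ℓ`, and at the end
`q = 1` and `N_H(a_i, A) = 0`. -/
theorem stmt11 (L' K : ℕ) (A : Finset (List Bool)) (q : ℤ)
    (h0 : 0 < q) (h1 : q ≤ (2 : ℤ) ^ L' - NHl L' K [] A) :
    (∀ ℓ ≤ L', 0 < (greedy L' K A q ℓ).2 ∧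
      (greedy L' K A q ℓ).2 ≤ (2 : ℤ) ^ (L' - ℓ) - NHl L' K (greedy L' K A q ℓ).1 A) ∧
    (greedy L' K A q L').2 = 1 ∧
    NHl L' K (greedy L' K A q L').1 A = 0 := by
  have inv : ∀ ℓ ≤ L', 0 < (greedy L' K A q ℓ).2 ∧
      (greedy L' K A q ℓ).2 ≤ (2 : ℤ) ^ (L' - ℓ) - NHl L' K (greedy L' K A q ℓ).1 A := by
    intro ℓ hℓ
    induction ℓ with
    | zero => exact ⟨h0, by simpa [greedy] using h1⟩
    | succ n ih =>
      have hn : n ≤ L' := by omega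
      obtain ⟨hpos, hle⟩ := ih hn
      set s := greedy L' K A q n with hs
      have hlen : s.1.length = n := greedy_len L' K A q n
      have hsplit := NHl_split L' K A s.1 (by omega)
      have hpow : (2 : ℤ) ^ (L' - n) = 2 ^ (L' - (n + 1)) + 2 ^ (L' - (n + 1)) := by
        have he : L' - n = (L' - (n + 1)) + 1 := by omega
        rw [he, pow_succ]; ring
    -- note: hsplit is on NHl s.1; but NHl_split takes a = s.1 whose length is s.1.length; fine
      rw [greedy_succ]
      unfold greedyStep
      simp only [← hs, hlen]
      split
      · rename_i h
        refine ⟨hpos, h⟩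
      · rename_i h
        push_neg at h
        constructor
        · simpa using h
        · have hcast : (NHl L' K s.1 A : ℤ)
              = NHl L' K (s.1 ++ [false]) A + NHl L' K (s.1 ++ [true]) A := by
            exact_mod_cast congrArg (Nat.cast : ℕ → ℤ) hsplit
          simp only []
          linarith [hle, hpow, hcast]
  refine ⟨inv, ?_, ?_⟩
  · obtain ⟨hp, hl⟩ := inv L' le_rfl
    simp only [Nat.sub_self, pow_zero] at hl
    omega
  · obtain ⟨hp, hl⟩ := inv L' le_rfl
    simp only [Nat.sub_self, pow_zero] at hl
    omega
end

section
/- With the setup of the greedy bit-by-bit encoding algorithm (substitution version), the output string a_i satisfies decimal(a_i) = q_i − 1 + ∑_{ℓ : a_{i,ℓ}=1} N_H((a_{i,1},…,a_{i,ℓ−1},0), {a_j}_{j=1}^{i−1}), where decimal(a) = ∑_{ℓ=1}^{L'} a_ℓ · 2^{L'−ℓ} is the value of a read as a binary number. -/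
/-- `decimal(a) = ∑_ℓ a_ℓ 2^{|a|−ℓ}`: the value of `a` read as a binary number. -/
def decimalL (a : List Bool) : ℕ :=
  a.foldl (fun acc b => 2 * acc + (if b then 1 else 0)) 0

lemma prefix_snoc_iff {a l : List Bool} {b : Bool} (h : a.length < l.length) :
    a ++ [b] <+: l ↔ a <+: l ∧ l[a.length] = b := by
  rw [List.prefix_iff_eq_take, List.prefix_iff_eq_take]
  have ht : l.take (a.length + 1) = l.take a.length ++ [l[a.length]] := by
    rw [List.take_succ, List.getElem?_eq_getElem h]
    rfl
  have hlen : (a ++ [b]).length = a.length + 1 := by simp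
  rw [hlen, ht]
  constructor
  · intro he
    have hl : a = l.take a.length ∧ [b] = [l[a.length]] := by
      apply List.append_inj he
      simp [Nat.le_of_lt h]
    refine ⟨hl.1, ?_⟩
    have := hl.2
    simp at this
    exact this.symm
  · rintro ⟨h1, h2⟩
    rw [← h1, h2]

lemma decimal_snoc (a : List Bool) (b : Bool) :
    decimalL (a ++ [b]) = 2 * decimalL a + (if b then 1 else 0) := by
  unfold decimalL
  rw [List.foldl_append]
  rfl

lemma greedy_invariant (L' K : ℕ) (A : Finset (List Bool)) (q : ℤ)
    (h0 : 0 < q) (h1 : q ≤ (2 : ℤ) ^ L' - NHl L' K [] A) (n : ℕ) (hn : n ≤ L') :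
    0 < (greedy L' K A q n).2 ∧
      (greedy L' K A q n).2 ≤ (2 : ℤ) ^ (L' - n) - NHl L' K (greedy L' K A q n).1 A := by
  induction n with
  | zero =>
    refine ⟨h0, ?_⟩
    simpa [greedy] using h1
  | succ n ih =>
    have hnL : n < L' := Nat.lt_of_succ_le hn
    obtain ⟨hp, hb⟩ := ih (Nat.le_of_lt hnL)
    set s := greedy L' K A q n with hs
    have hlen : s.1.length = n := greedy_len L' K A q n
    have hsplit : (NHl L' K s.1 A : ℤ) =
        NHl L' K (s.1 ++ [false]) A + NHl L' K (s.1 ++ [true]) A := by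
      have := NHl_split L' K A s.1 (by rw [hlen]; exact hnL)
      exact_mod_cast congrArg (Nat.cast : ℕ → ℤ) this
    have hpow : (2 : ℤ) ^ (L' - n) = 2 ^ (L' - (n + 1)) + 2 ^ (L' - (n + 1)) := by
      have : L' - n = (L' - (n + 1)) + 1 := by omega
      rw [this, pow_succ]; ring
    rw [greedy_succ, ← hs]
    unfold greedyStep
    rw [hlen]
    split_ifs with hc
    · refine ⟨hp, hc⟩
    · push_neg at hc
      constructor
      · simpa using hc
      · simp only
        have : s.2 ≤ (2 : ℤ) ^ (L' - n) - NHl L' K s.1 A := hb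
        rw [hpow, hsplit] at this
        linarith

lemma greedy_main (L' K : ℕ) (A : Finset (List Bool)) (q : ℤ) (n : ℕ) (hn : n ≤ L') :
    (decimalL (greedy L' K A q n).1 : ℤ) * 2 ^ (L' - n) =
      q - (greedy L' K A q n).2 +
      ∑ ℓ ∈ Finset.Icc 1 n,
        if (greedy L' K A q ℓ).1 = (greedy L' K A q (ℓ - 1)).1 ++ [true] then
          (NHl L' K ((greedy L' K A q (ℓ - 1)).1 ++ [false]) A : ℤ)
        else 0 := by
  induction n with
  | zero => simp [greedy, decimalL]
  | succ n ih =>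
    have hnL : n < L' := Nat.lt_of_succ_le hn
    have ihn := ih (Nat.le_of_lt hnL)
    have hIcc : Finset.Icc 1 (n + 1) = insert (n + 1) (Finset.Icc 1 n) := by
      ext x
      simp only [Finset.mem_Icc, Finset.mem_insert]
      omega
    rw [hIcc, Finset.sum_insert (by simp)]
    set s := greedy L' K A q n with hs
    have hlen : s.1.length = n := greedy_len L' K A q n
    have hpow : (2 : ℤ) ^ (L' - n) = 2 ^ (L' - (n + 1)) * 2 := by
      have : L' - n = (L' - (n + 1)) + 1 := by omega
      rw [this, pow_succ]
    have hstep : greedy L' K A q (n + 1) = greedyStep L' K A s := greedy_succ L' K A q n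
    have hsub : n + 1 - 1 = n := rfl
    unfold greedyStep at hstep
    rw [hlen] at hstep
    split_ifs at hstep with hc
    · -- bit false
      have hne : ¬ ((greedy L' K A q (n + 1)).1 = (greedy L' K A q (n + 1 - 1)).1 ++ [true]) := by
        rw [hsub, ← hs, hstep]
        simp
      rw [if_neg hne, hstep]
      simp only [decimal_snoc]
      push_cast
      rw [hpow] at ihn
      linear_combination ihn
    · -- bit true
      have hne : (greedy L' K A q (n + 1)).1 = (greedy L' K A q (n + 1 - 1)).1 ++ [true] := by
        rw [hsub, ← hs, hstep]
      rw [if_pos hne, hstep, hsub, ← hs]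
      simp only [decimal_snoc]
      push_cast
      rw [hpow] at ihn
      linear_combination ihn

/-- the output `a_i` of the greedy algorithm satisfies
`decimal(a_i) = q_i − 1 + ∑_{ℓ : a_{i,ℓ}=1} N_H((a_{i,1},…,a_{i,ℓ−1},0), A)`. -/
theorem stmt12 (L' K : ℕ) (A : Finset (List Bool)) (q : ℤ)
    (h0 : 0 < q) (h1 : q ≤ (2 : ℤ) ^ L' - NHl L' K [] A) :
    (decimalL (greedy L' K A q L').1 : ℤ) = q - 1 +
      ∑ ℓ ∈ Finset.Icc 1 L',
        if (greedy L' K A q ℓ).1 = (greedy L' K A q (ℓ - 1)).1 ++ [true] then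
          (NHl L' K ((greedy L' K A q (ℓ - 1)).1 ++ [false]) A : ℤ)
        else 0 := by
  have hmain := greedy_main L' K A q L' le_rfl
  have hinv := greedy_invariant L' K A q h0 h1 L' le_rfl
  have hq1 : (greedy L' K A q L').2 = 1 := by
    obtain ⟨hp, hb⟩ := hinv
    have hN : (0 : ℤ) ≤ (NHl L' K (greedy L' K A q L').1 A : ℤ) := by positivity
    have : (2 : ℤ) ^ (L' - L') = 1 := by simp
    rw [this] at hb
    omega
  rw [Nat.sub_self, pow_zero, mul_one] at hmain
  rw [hmain, hq1]
end
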